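/- arXiv:2103.04618 — 3 statements merged into one kernel-verified Lean document; each statement's English description precedes it below -/
import Mathlib

section
/- Let $N_c \geq 1$, let $p \in \mathbb{R}^{N_c}$ be a probability vector, and define the DSCE loss $L(p,k) = -\sum_{j=1}^{N_c} p_j \log \widetilde{y}^{(k)}_j$ where $\widetilde{y}^{(k)}$ is the softmax of the one-hot vector at class $k$. Then $\sum_{k=1}^{N_c} L(p,k) = -1 - N_c \log(1/(N_c - 1 + e))$; in particular this sum is a constant independent of $p$. -/
/-- Symmetry (noise-tolerance) condition for the DSCE loss: the sum over all labels is
the constant `-1 - N * log(1/(N-1+e))`, independent of the probability vector `p`. -/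
theorem dsce_symmetry (N : ℕ) (hN : 1 ≤ N) (p : Fin N → ℝ)
    (hp_nonneg : ∀ j, 0 ≤ p j) (hp_sum : ∑ j, p j = 1) :
    ∑ k, (-(∑ j, p j * Real.log
        (Real.exp (if j = k then (1:ℝ) else 0) / ∑ m, Real.exp (if m = k then (1:ℝ) else 0))))
      = -1 - (N : ℝ) * Real.log (1 / ((N : ℝ) - 1 + Real.exp 1)) := by
  set S : ℝ := (N : ℝ) - 1 + Real.exp 1 with hSdef
  have hN1 : (1 : ℝ) ≤ (N : ℝ) := by exact_mod_cast hN
  have hSpos : 0 < S := by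
    have := Real.exp_pos 1
    have : (0:ℝ) < Real.exp 1 := this
    nlinarith
  have hS : ∀ k : Fin N, (∑ m, Real.exp (if m = k then (1:ℝ) else 0)) = S := by
    intro k
    have h1 : ∀ m : Fin N, Real.exp (if m = k then (1:ℝ) else 0)
        = (if m = k then Real.exp 1 - 1 else 0) + 1 := by
      intro m; split <;> simp [Real.exp_zero]
    rw [Finset.sum_congr rfl (fun m _ => h1 m), Finset.sum_add_distrib,
      Finset.sum_ite_eq' Finset.univ k (fun _ => Real.exp 1 - 1)]
    simp [hSdef]
    ring
  have hlog : ∀ (k j : Fin N),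
      Real.log (Real.exp (if j = k then (1:ℝ) else 0) / ∑ m, Real.exp (if m = k then (1:ℝ) else 0))
        = (if j = k then (1:ℝ) else 0) - Real.log S := by
    intro k j
    rw [hS k, Real.log_div (Real.exp_ne_zero _) (ne_of_gt hSpos), Real.log_exp]
  have hinner : ∀ k : Fin N,
      (∑ j, p j * Real.log
        (Real.exp (if j = k then (1:ℝ) else 0) / ∑ m, Real.exp (if m = k then (1:ℝ) else 0)))
        = p k - Real.log S := by
    intro k
    rw [Finset.sum_congr rfl (fun j _ => by rw [hlog k j])]
    have : ∀ j : Fin N, p j * ((if j = k then (1:ℝ) else 0) - Real.log S)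
        = (if j = k then p j else 0) - p j * Real.log S := by
      intro j; split <;> ring
    rw [Finset.sum_congr rfl (fun j _ => this j), Finset.sum_sub_distrib,
      Finset.sum_ite_eq' Finset.univ k p, ← Finset.sum_mul, hp_sum]
    simp
  rw [Finset.sum_congr rfl (fun k _ => by rw [hinner k]), Finset.sum_neg_distrib,
    Finset.sum_sub_distrib, hp_sum]
  simp only [Finset.sum_const, Finset.card_univ, Fintype.card_fin, nsmul_eq_mul]
  rw [Real.log_div one_ne_zero (ne_of_gt hSpos), Real.log_one]
  ring
end

section
/- Let $L(p,k)$ be any loss on probability vectors satisfying the symmetry condition $\sum_{k=1}^{N_c} L(p,k) = Z$ for all $p$, where $Z$ is a constant. Let labels be corrupted by symmetric noise with rate $\eta < (N_c-1)/N_c$: the observed label equals the true label $y$ with probability $1-\eta$ and equals each other label with probability $\eta/(N_c-1)$. Then for every probability vector $p$ and true label $y$, the expected noisy loss satisfies $\mathbb{E}[L(p, \tilde{y})] = (1 - \frac{\eta N_c}{N_c - 1}) L(p, y) + \frac{\eta}{N_c - 1} Z$. -/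
/-- Under the symmetry condition, the expected loss under symmetric label noise of rate `η`
is an affine transformation of the clean loss. -/
theorem noisy_risk_affine (N : ℕ) (hN : 2 ≤ N)
    (L : (Fin N → ℝ) → Fin N → ℝ) (Z : ℝ)
    (hsym : ∀ p : Fin N → ℝ, (∀ j, 0 ≤ p j) → (∑ j, p j = 1) → ∑ k, L p k = Z)
    (η : ℝ) (hη0 : 0 ≤ η) (hη : η < ((N : ℝ) - 1) / N)
    (p : Fin N → ℝ) (hp_nonneg : ∀ j, 0 ≤ p j) (hp_sum : ∑ j, p j = 1) (y : Fin N) :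
    (1 - η) * L p y + ∑ j ∈ Finset.univ.erase y, (η / ((N : ℝ) - 1)) * L p j
      = (1 - η * N / ((N : ℝ) - 1)) * L p y + (η / ((N : ℝ) - 1)) * Z := by
  have hZ := hsym p hp_nonneg hp_sum
  have herase : ∑ j ∈ Finset.univ.erase y, L p j = Z - L p y := by
    have := Finset.add_sum_erase Finset.univ (L p) (Finset.mem_univ y)
    linarith [this, hZ]
  rw [← Finset.mul_sum, herase]
  have hN1 : ((N : ℝ) - 1) ≠ 0 := by
    have : (2 : ℝ) ≤ N := by exact_mod_cast hN
    linarith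
  field_simp
  ring
end

section
/- Under the hypotheses of the previous statement (symmetric loss with constant $Z$ and symmetric label noise at rate $\eta < (N_c-1)/N_c$), any minimizer of the expected noisy loss $\mathbb{E}[L(p,\tilde{y})]$ over probability vectors $p$ is also a minimizer of the clean loss $L(p, y)$, and conversely. -/
/-- Noise tolerance: under the symmetry condition and symmetric label noise of rate
`η < (N-1)/N`, minimizers of the expected noisy loss over probability vectors coincide
with minimizers of the clean loss. -/
theorem noise_tolerance (N : ℕ) (hN : 2 ≤ N)
    (L : (Fin N → ℝ) → Fin N → ℝ) (Z : ℝ)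
    (hsym : ∀ p : Fin N → ℝ, (∀ j, 0 ≤ p j) → (∑ j, p j = 1) → ∑ k, L p k = Z)
    (η : ℝ) (hη0 : 0 ≤ η) (hη : η < ((N : ℝ) - 1) / N) (y : Fin N)
    (p : Fin N → ℝ) (hp_nonneg : ∀ j, 0 ≤ p j) (hp_sum : ∑ j, p j = 1) :
    ((∀ q : Fin N → ℝ, (∀ j, 0 ≤ q j) → (∑ j, q j = 1) →
        (1 - η) * L p y + ∑ j ∈ Finset.univ.erase y, (η / ((N : ℝ) - 1)) * L p j
          ≤ (1 - η) * L q y + ∑ j ∈ Finset.univ.erase y, (η / ((N : ℝ) - 1)) * L q j)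
      ↔ (∀ q : Fin N → ℝ, (∀ j, 0 ≤ q j) → (∑ j, q j = 1) → L p y ≤ L q y)) := by
  have hN1 : (1:ℝ) < (N:ℝ) := by exact_mod_cast Nat.lt_of_lt_of_le one_lt_two hN
  have hN0 : (0:ℝ) < (N:ℝ) := lt_trans one_pos hN1
  have hNm1 : (0:ℝ) < (N:ℝ) - 1 := by linarith
  set c : ℝ := 1 - η - η / ((N:ℝ) - 1) with hc
  have hcpos : 0 < c := by
    have h1 : η * (N:ℝ) < (N:ℝ) - 1 := (lt_div_iff₀ hN0).mp hη
    have h2 : η / ((N:ℝ) - 1) < 1 - η := by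
      rw [div_lt_iff₀ hNm1]; nlinarith
    rw [hc]; linarith
  have key : ∀ q : Fin N → ℝ, (∀ j, 0 ≤ q j) → (∑ j, q j = 1) →
      (1 - η) * L q y + ∑ j ∈ Finset.univ.erase y, (η / ((N : ℝ) - 1)) * L q j
        = c * L q y + (η / ((N:ℝ) - 1)) * Z := by
    intro q hq hqs
    have hsum : ∑ j ∈ Finset.univ.erase y, L q j = Z - L q y := by
      have := hsym q hq hqs
      have h2 : ∑ j ∈ Finset.univ.erase y, L q j + L q y = ∑ k, L q k :=
        Finset.sum_erase_add _ _ (Finset.mem_univ y)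
      linarith
    rw [← Finset.mul_sum, hsum, hc]; ring
  constructor
  · intro h q hq hqs
    have := h q hq hqs
    rw [key p hp_nonneg hp_sum, key q hq hqs] at this
    have h2 : c * L p y ≤ c * L q y := le_of_add_le_add_right this
    exact le_of_mul_le_mul_left h2 hcpos
  · intro h q hq hqs
    have := h q hq hqs
    rw [key p hp_nonneg hp_sum, key q hq hqs]
    exact add_le_add_left (mul_le_mul_of_nonneg_left this hcpos.le) _
end
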